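/- Let $A \in M_N(\{0,1\})$ be a primitive matrix, let $B$ be a unital C*-algebra, and suppose given elements $u_{\alpha\beta} \in B$ for admissible words $\alpha,\beta$ of length $1$ such that the matrices of range projections $p = (u_{\alpha\beta}u_{\alpha\beta}^*)$ and source projections $q$ are magic unitaries and $Ap = qA$. Then for each $n \ge 1$, the matrices $(p_{\alpha\beta})_{\alpha,\beta \in V_A^n}$, where $p_{\alpha\beta} = (u_{\alpha_1\beta_1}\cdots u_{\alpha_n\beta_n})(u_{\alpha_1\beta_1}\cdots u_{\alpha_n\beta_n})^*$ and each product $u_{\alpha_1\beta_1}\cdots u_{\alpha_n\beta_n}$ is assumed to be a partial isometry, satisfy $\sum_{\beta \in V_A^n} p_{\alpha\beta} = 1 = \sum_{\beta \in V_A^n} p_{\beta\alpha}$ for each $\alpha \in V_A^n$, i.e. form a magic unitary indexed by admissible words of length $n$. -/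
import Mathlib


/-- Admissibility of a word `α₁ ⋯ α_{n+1}` for the `{0,1}`-matrix `A`:
`A_{αᵢ α_{i+1}} = 1` for all `i`. -/
def Adm {N : ℕ} (A : Matrix (Fin N) (Fin N) ℕ) {n : ℕ}
    (α : Fin (n + 1) → Fin N) : Prop :=
  ∀ i : Fin n, A (α i.castSucc) (α i.succ) = 1

instance {N n : ℕ} (A : Matrix (Fin N) (Fin N) ℕ) :
    DecidablePred (Adm A (n := n)) := fun _ => by
  unfold Adm; infer_instance

lemma adm_cons {N n : ℕ} (A : Matrix (Fin N) (Fin N) ℕ) (b : Fin N)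
    (β : Fin (n + 1) → Fin N) :
    Adm A (Fin.cons b β) ↔ A b (β 0) = 1 ∧ Adm A β := by
  constructor
  · intro h
    refine ⟨by simpa using h 0, fun i => ?_⟩
    have := h i.succ
    rwa [← Fin.succ_castSucc, Fin.cons_succ, Fin.cons_succ] at this
  · rintro ⟨h0, h⟩ i
    induction i using Fin.cases with
    | zero => simpa using h0
    | succ j =>
      rw [← Fin.succ_castSucc, Fin.cons_succ, Fin.cons_succ]
      exact h j


set_option linter.unusedSectionVars false

section aux

variable {B : Type*} [NormedRing B] [StarRing B] [CStarRing B] [CompleteSpace B]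
  [NormedAlgebra ℂ B] [StarModule ℂ B]

lemma sum_one_orth {N : ℕ} (e : Fin N → B) (hsa : ∀ i, star (e i) = e i)
    (hid : ∀ i, e i * e i = e i) (hsum : ∑ i, e i = 1)
    {i j : Fin N} (hij : i ≠ j) : e i * e j = 0 := by
  letI : CStarAlgebra B := ⟨⟩
  letI := CStarAlgebra.spectralOrder B
  haveI := CStarAlgebra.spectralOrderedRing B
  have hsum' : ∑ k, e j * e k * e j = e j := by
    simp only [mul_assoc, ← Finset.mul_sum]
    rw [← Finset.sum_mul, hsum, one_mul, hid]
  have h1 := Finset.add_sum_erase Finset.univ (fun k => e j * e k * e j) (Finset.mem_univ j)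
  rw [hsum'] at h1
  simp only [hid j] at h1
  have h0 : ∑ k ∈ Finset.univ.erase j, e j * e k * e j = 0 := add_eq_left.mp h1
  have hterm : e j * e i * e j = 0 := by
    have := (Finset.sum_eq_zero_iff_of_nonneg (fun k _ => by
      calc (0:B) ≤ star (e k * e j) * (e k * e j) := star_mul_self_nonneg _
        _ = e j * e k * e j := by
          rw [star_mul, hsa, hsa]
          rw [mul_assoc, ← mul_assoc (e k), hid k, ← mul_assoc])).mp h0
    exact this i (Finset.mem_erase.mpr ⟨hij, Finset.mem_univ i⟩)
  have : star (e i * e j) * (e i * e j) = 0 := by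
    rw [star_mul, hsa, hsa, mul_assoc, ← mul_assoc (e i), hid i, ← mul_assoc]
    exact hterm
  exact (CStarRing.star_mul_self_eq_zero_iff _).mp this

variable {N : ℕ} {A : Matrix (Fin N) (Fin N) ℕ} {u p q : Fin N → Fin N → B}

lemma uu_vanish
    (hA01 : ∀ i j, A i j = 0 ∨ A i j = 1)
    (hpi : ∀ a b, u a b * star (u a b) * u a b = u a b)
    (hp : ∀ a b, p a b = u a b * star (u a b))
    (hq : ∀ a b, q a b = star (u a b) * u a b)
    (hpcol : ∀ a, ∑ b, p b a = 1)
    (hqrow : ∀ a, ∑ b, q a b = 1)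
    (hint : ∀ a d, ∑ b, A a b • p b d = ∑ b, A b d • q a b)
    {a b c d : Fin N} (h : A a c ≠ A b d) : u a b * u c d = 0 := by
  have p_idem : ∀ x y, p x y * p x y = p x y := fun x y => by rw [hp, ← mul_assoc, hpi]
  have q_idem : ∀ x y, q x y * q x y = q x y := fun x y => by
    rw [hq, mul_assoc, ← mul_assoc (u x y), hpi]
  have p_col_orth : ∀ {d' b' c' : Fin N}, b' ≠ c' → p b' d' * p c' d' = 0 :=
    fun {d' b' c'} hb => sum_one_orth (fun x => p x d')
      (fun x => by show star (p x d') = p x d'; rw [hp, star_mul, star_star]) (fun x => p_idem x d') (hpcol d') hb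
  have q_row_orth : ∀ {a' b' c' : Fin N}, b' ≠ c' → q a' b' * q a' c' = 0 :=
    fun {a' b' c'} hb => sum_one_orth (fun x => q a' x)
      (fun x => by show star (q a' x) = q a' x; rw [hq, star_mul, star_star]) (fun x => q_idem a' x) (hqrow a') hb
  have qp0 : q a b * p c d = 0 := by
    have H := congrArg (fun x => q a b * x * p c d) (hint a d)
    simp only [Finset.mul_sum, Finset.sum_mul, mul_smul_comm, smul_mul_assoc] at H
    rw [Finset.sum_eq_single c (fun c' _ hc' => by
        rw [mul_assoc, p_col_orth hc', mul_zero, smul_zero]) (by simp),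
      Finset.sum_eq_single b (fun b' _ hb' => by
        rw [q_row_orth (Ne.symm hb'), zero_mul, smul_zero]) (by simp)] at H
    rw [mul_assoc (q a b), p_idem] at H
    rw [q_idem] at H
    rcases hA01 a c with h1 | h1 <;> rcases hA01 b d with h2 | h2 <;>
      rw [h1, h2] at H h <;> simp at H h
    · simpa using H.symm
    · simpa using H
  have h1 : u a b * q a b = u a b := by rw [hq, ← mul_assoc, hpi]
  have h2 : p c d * u c d = u c d := by rw [hp, hpi]
  rw [← h1, ← h2, mul_assoc (u a b), ← mul_assoc (q a b), qp0, zero_mul, mul_zero]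


lemma main_magic {N : ℕ} {A : Matrix (Fin N) (Fin N) ℕ} {u p q : Fin N → Fin N → B}
    (hA01 : ∀ i j, A i j = 0 ∨ A i j = 1)
    (hpi : ∀ a b, u a b * star (u a b) * u a b = u a b)
    (hp : ∀ a b, p a b = u a b * star (u a b))
    (hq : ∀ a b, q a b = star (u a b) * u a b)
    (hprow : ∀ a, ∑ b, p a b = 1) (hpcol : ∀ a, ∑ b, p b a = 1)
    (hqrow : ∀ a, ∑ b, q a b = 1)
    (hint : ∀ a d, ∑ b, A a b • p b d = ∑ b, A b d • q a b) :
    ∀ n, ∀ α : Fin (n + 1) → Fin N, Adm A α →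
      (∑ β ∈ Finset.univ.filter (fun β : Fin (n + 1) → Fin N => Adm A β),
          (List.ofFn fun i => u (α i) (β i)).prod *
            star ((List.ofFn fun i => u (α i) (β i)).prod) = 1) ∧
      (∑ β ∈ Finset.univ.filter (fun β : Fin (n + 1) → Fin N => Adm A β),
          (List.ofFn fun i => u (β i) (α i)).prod *
            star ((List.ofFn fun i => u (β i) (α i)).prod) = 1) := by
  have uu := fun {a b c d : Fin N} (h : A a c ≠ A b d) =>
    uu_vanish hA01 hpi hp hq hpcol hqrow hint h
  intro n
  induction n with
  | zero =>
    intro α _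
    have hall : ∀ β ∈ (Finset.univ : Finset (Fin 1 → Fin N)), Adm A β :=
      fun β _ i => i.elim0
    rw [Finset.filter_true_of_mem hall]
    constructor
    · rw [← Equiv.sum_comp (Equiv.funUnique (Fin 1) (Fin N)).symm
        (fun β : Fin 1 → Fin N => (List.ofFn fun i => u (α i) (β i)).prod *
          star ((List.ofFn fun i => u (α i) (β i)).prod))]
      simpa [List.ofFn_succ, ← hp] using hprow (α 0)
    · rw [← Equiv.sum_comp (Equiv.funUnique (Fin 1) (Fin N)).symm
        (fun β : Fin 1 → Fin N => (List.ofFn fun i => u (β i) (α i)).prod *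
          star ((List.ofFn fun i => u (β i) (α i)).prod))]
      simpa [List.ofFn_succ, ← hp] using hpcol (α 0)
  | succ m ih =>
    intro α hα
    have hA0 : A (α 0) (α 1) = 1 := by simpa using hα 0
    have htail : Adm A (fun i => α i.succ) := fun i => by
      have := hα i.succ
      rwa [← Fin.succ_castSucc] at this
    obtain ⟨IH1, IH2⟩ := ih (fun i => α i.succ) htail
    constructor
    · rw [Finset.sum_filter,
        ← Equiv.sum_comp (Fin.consEquiv fun _ : Fin (m + 2) => Fin N)
          (fun β : Fin (m + 2) → Fin N => if Adm A β then
            (List.ofFn fun i => u (α i) (β i)).prod *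
              star ((List.ofFn fun i => u (α i) (β i)).prod) else 0),
        Fintype.sum_prod_type]
      have inner : ∀ b : Fin N,
          (∑ β' : Fin (m + 1) → Fin N, if Adm A ((Fin.cons b β' : Fin (m + 2) → Fin N)) then
            (List.ofFn fun i => u (α i) ((Fin.cons b β' : Fin (m + 2) → Fin N) i)).prod *
              star ((List.ofFn fun i => u (α i) ((Fin.cons b β' : Fin (m + 2) → Fin N) i)).prod) else 0) =
          u (α 0) b * star (u (α 0) b) := by
        intro b
        have hWsplit : ∀ β' : Fin (m + 1) → Fin N,
            (List.ofFn fun i : Fin (m + 2) => u (α i) ((Fin.cons b β' : Fin (m + 2) → Fin N) i)).prod =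
            u (α 0) b * (List.ofFn fun i : Fin (m + 1) => u (α i.succ) (β' i)).prod := by
          intro β'
          rw [List.ofFn_succ]
          simp [Fin.cons_succ]
        have step : ∀ β' : Fin (m + 1) → Fin N,
            (if Adm A ((Fin.cons b β' : Fin (m + 2) → Fin N)) then
              (List.ofFn fun i => u (α i) ((Fin.cons b β' : Fin (m + 2) → Fin N) i)).prod *
                star ((List.ofFn fun i => u (α i) ((Fin.cons b β' : Fin (m + 2) → Fin N) i)).prod) else 0) =
            u (α 0) b * (if Adm A β' then
              (List.ofFn fun i : Fin (m + 1) => u (α i.succ) (β' i)).prod *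
                star ((List.ofFn fun i : Fin (m + 1) => u (α i.succ) (β' i)).prod) else 0) *
              star (u (α 0) b) := by
          intro β'
          by_cases hβ' : Adm A β'
          · by_cases hb : A b (β' 0) = 1
            · rw [if_pos ((adm_cons A b β').mpr ⟨hb, hβ'⟩), if_pos hβ', hWsplit β']
              simp only [star_mul, mul_assoc]
            · have hnadm : ¬ Adm A ((Fin.cons b β' : Fin (m + 2) → Fin N)) := fun h => hb ((adm_cons A b β').mp h).1
              have hb0 : A b (β' 0) = 0 := (hA01 b (β' 0)).resolve_right hb
              rw [if_neg hnadm, if_pos hβ']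
              have hzero : u (α 0) b *
                  (List.ofFn fun i : Fin (m + 1) => u (α i.succ) (β' i)).prod = 0 := by
                rw [List.ofFn_succ, List.prod_cons, ← mul_assoc,
                  uu (by simp only [Fin.succ_zero_eq_one, hA0, hb0]; exact one_ne_zero), zero_mul]
              rw [← mul_assoc, hzero, zero_mul, zero_mul]
          · have hnadm : ¬ Adm A ((Fin.cons b β' : Fin (m + 2) → Fin N)) := fun h => hβ' ((adm_cons A b β').mp h).2
            rw [if_neg hnadm, if_neg hβ', mul_zero, zero_mul]
        rw [Finset.sum_congr rfl (fun β' _ => step β'), ← Finset.sum_mul, ← Finset.mul_sum,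
          ← Finset.sum_filter, IH1, mul_one]
      calc ∑ b, ∑ β' : Fin (m + 1) → Fin N,
            (if Adm A ((Fin.consEquiv fun _ : Fin (m + 2) => Fin N) (b, β')) then
              (List.ofFn fun i => u (α i) ((Fin.consEquiv fun _ : Fin (m + 2) => Fin N) (b, β') i)).prod *
                star ((List.ofFn fun i => u (α i) ((Fin.consEquiv fun _ : Fin (m + 2) => Fin N) (b, β') i)).prod) else 0)
          = ∑ b, u (α 0) b * star (u (α 0) b) := by
            refine Finset.sum_congr rfl fun b _ => ?_
            simpa [Fin.consEquiv] using inner b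
        _ = 1 := by simpa [← hp] using hprow (α 0)
    · rw [Finset.sum_filter,
        ← Equiv.sum_comp (Fin.consEquiv fun _ : Fin (m + 2) => Fin N)
          (fun β : Fin (m + 2) → Fin N => if Adm A β then
            (List.ofFn fun i => u (β i) (α i)).prod *
              star ((List.ofFn fun i => u (β i) (α i)).prod) else 0),
        Fintype.sum_prod_type]
      have inner : ∀ b : Fin N,
          (∑ β' : Fin (m + 1) → Fin N, if Adm A ((Fin.cons b β' : Fin (m + 2) → Fin N)) then
            (List.ofFn fun i => u ((Fin.cons b β' : Fin (m + 2) → Fin N) i) (α i)).prod *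
              star ((List.ofFn fun i => u ((Fin.cons b β' : Fin (m + 2) → Fin N) i) (α i)).prod) else 0) =
          u b (α 0) * star (u b (α 0)) := by
        intro b
        have hWsplit : ∀ β' : Fin (m + 1) → Fin N,
            (List.ofFn fun i : Fin (m + 2) => u ((Fin.cons b β' : Fin (m + 2) → Fin N) i) (α i)).prod =
            u b (α 0) * (List.ofFn fun i : Fin (m + 1) => u (β' i) (α i.succ)).prod := by
          intro β'
          rw [List.ofFn_succ]
          simp [Fin.cons_succ]
        have step : ∀ β' : Fin (m + 1) → Fin N,
            (if Adm A ((Fin.cons b β' : Fin (m + 2) → Fin N)) then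
              (List.ofFn fun i => u ((Fin.cons b β' : Fin (m + 2) → Fin N) i) (α i)).prod *
                star ((List.ofFn fun i => u ((Fin.cons b β' : Fin (m + 2) → Fin N) i) (α i)).prod) else 0) =
            u b (α 0) * (if Adm A β' then
              (List.ofFn fun i : Fin (m + 1) => u (β' i) (α i.succ)).prod *
                star ((List.ofFn fun i : Fin (m + 1) => u (β' i) (α i.succ)).prod) else 0) *
              star (u b (α 0)) := by
          intro β'
          by_cases hβ' : Adm A β'
          · by_cases hb : A b (β' 0) = 1
            · rw [if_pos ((adm_cons A b β').mpr ⟨hb, hβ'⟩), if_pos hβ', hWsplit β']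
              simp only [star_mul, mul_assoc]
            · have hnadm : ¬ Adm A ((Fin.cons b β' : Fin (m + 2) → Fin N)) := fun h => hb ((adm_cons A b β').mp h).1
              have hb0 : A b (β' 0) = 0 := (hA01 b (β' 0)).resolve_right hb
              rw [if_neg hnadm, if_pos hβ']
              have hzero : u b (α 0) *
                  (List.ofFn fun i : Fin (m + 1) => u (β' i) (α i.succ)).prod = 0 := by
                rw [List.ofFn_succ, List.prod_cons, ← mul_assoc,
                  uu (by simp only [Fin.succ_zero_eq_one, hA0, hb0]; exact zero_ne_one), zero_mul]
              rw [← mul_assoc, hzero, zero_mul, zero_mul]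
          · have hnadm : ¬ Adm A ((Fin.cons b β' : Fin (m + 2) → Fin N)) := fun h => hβ' ((adm_cons A b β').mp h).2
            rw [if_neg hnadm, if_neg hβ', mul_zero, zero_mul]
        rw [Finset.sum_congr rfl (fun β' _ => step β'), ← Finset.sum_mul, ← Finset.mul_sum,
          ← Finset.sum_filter, IH2, mul_one]
      calc ∑ b, ∑ β' : Fin (m + 1) → Fin N,
            (if Adm A ((Fin.consEquiv fun _ : Fin (m + 2) => Fin N) (b, β')) then
              (List.ofFn fun i => u ((Fin.consEquiv fun _ : Fin (m + 2) => Fin N) (b, β') i) (α i)).prod *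
                star ((List.ofFn fun i => u ((Fin.consEquiv fun _ : Fin (m + 2) => Fin N) (b, β') i) (α i)).prod) else 0)
          = ∑ b, u b (α 0) * star (u b (α 0)) := by
            refine Finset.sum_congr rfl fun b _ => ?_
            simpa [Fin.consEquiv] using inner b
        _ = 1 := by simpa [← hp] using hpcol (α 0)

end aux

/-- Let `A ∈ M_N({0,1})` be primitive, `B` a unital C*-algebra,
with elements `u_{αβ} ∈ B` (for letters `α, β`) whose range projections `p` and
source projections `q` form magic unitaries with `A p = q A`. Assume moreover that
every product `u_{α₁β₁} ⋯ u_{α_{n+1}β_{n+1}}` along admissible words is a partial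
isometry. Then the matrix of range projections
`p_{αβ} = (u_{α₁β₁}⋯u_{α_{n+1}β_{n+1}})(u_{α₁β₁}⋯u_{α_{n+1}β_{n+1}})^*`
indexed by admissible words `α, β ∈ V_A^{n+1}` is a magic unitary: all its rows
and columns sum to `1`. -/
theorem word_magic_unitary {B : Type*} [NormedRing B] [StarRing B]
    [CStarRing B] [CompleteSpace B] [NormedAlgebra ℂ B] [StarModule ℂ B]
    {N : ℕ} (A : Matrix (Fin N) (Fin N) ℕ)
    (hA01 : ∀ i j, A i j = 0 ∨ A i j = 1)
    (hprim : ∃ k, ∀ i j, (A ^ k) i j ≠ 0)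
    (u : Fin N → Fin N → B)
    (hpi : ∀ a b, u a b * star (u a b) * u a b = u a b)
    (p q : Fin N → Fin N → B)
    (hp : ∀ a b, p a b = u a b * star (u a b))
    (hq : ∀ a b, q a b = star (u a b) * u a b)
    (hprow : ∀ a, ∑ b, p a b = 1) (hpcol : ∀ a, ∑ b, p b a = 1)
    (hqrow : ∀ a, ∑ b, q a b = 1) (hqcol : ∀ a, ∑ b, q b a = 1)
    (hint : ∀ a d, ∑ b, A a b • p b d = ∑ b, A b d • q a b)
    (n : ℕ)
    (hword : ∀ α β : Fin (n + 1) → Fin N, Adm A α → Adm A β →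
      (List.ofFn fun i => u (α i) (β i)).prod *
          star ((List.ofFn fun i => u (α i) (β i)).prod) *
          (List.ofFn fun i => u (α i) (β i)).prod =
        (List.ofFn fun i => u (α i) (β i)).prod) :
    ∀ α : Fin (n + 1) → Fin N, Adm A α →
      (∑ β ∈ Finset.univ.filter (fun β : Fin (n + 1) → Fin N => Adm A β),
          (List.ofFn fun i => u (α i) (β i)).prod *
            star ((List.ofFn fun i => u (α i) (β i)).prod) = 1) ∧
      (∑ β ∈ Finset.univ.filter (fun β : Fin (n + 1) → Fin N => Adm A β),
          (List.ofFn fun i => u (β i) (α i)).prod *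
            star ((List.ofFn fun i => u (β i) (α i)).prod) = 1) := by
  exact fun α hα => main_magic hA01 hpi hp hq hprow hpcol hqrow hint n α hα
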